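/- There is an absolute constant c₂ > 0 such that for all integers n ≥ 1 and k ≥ 1 there exists a polynomial P ∈ P_{n,k} with P(1) ≠ 0 and ‖P′‖_{[0,1]} ≤ c₂ (n/k + 1) |P(1)|. -/

import Mathlib

open Polynomial

section Aux
open Finset

private lemma aux_star (N m : ℕ) :
    derivative (∑ j ∈ range (m+1), C (((N+j).choose j : ℕ) : ℝ) * (X^(N+2) * (1-X)^j))
      = (∑ j ∈ range (m+1), C (((N+j).choose j : ℕ) : ℝ) * (X^(N+1) * (1-X)^j))
        + C ((((N+m+1) * (N+m).choose m : ℕ)) : ℝ) * (X^(N+1) * (1-X)^m) := by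
  induction m with
  | zero =>
    simp [derivative_X_pow]
    ring
  | succ m ih =>
    rw [sum_range_succ, derivative_add, ih, sum_range_succ _ (m+1)]
    have e1 : N + 2 - 1 = N + 1 := rfl
    have hd : derivative (C (((N+(m+1)).choose (m+1) : ℕ) : ℝ) * (X^(N+2) * (1-X)^(m+1)))
        = C (((N+(m+1)).choose (m+1) : ℕ) : ℝ) *
          (((N : ℝ[X]) + 2) * X^(N+1) * (1-X)^(m+1)
            - ((m : ℝ[X]) + 1) * X^(N+2) * (1-X)^m) := by
      rw [derivative_C_mul, derivative_mul]
      simp [derivative_pow, e1, map_ofNat, map_natCast]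
      ring_nf
      try exact Or.inl trivial
    rw [hd]
    have h1 : (N+m+1) * (N+m).choose m = (m+1) * ((N+(m+1)).choose (m+1)) := by
      have h := Nat.add_one_mul_choose_eq (N+m) m
      calc (N+m+1) * (N+m).choose m = (N+m+1).choose (m+1) * (m+1) := h
        _ = (m+1) * ((N+(m+1)).choose (m+1)) := by rw [mul_comm]; ring_nf
    have hkeyP : ((N:ℝ[X]) + (m:ℝ[X]) + 1) * (((N+m).choose m : ℕ) : ℝ[X])
        = ((m:ℝ[X])+1) * ((((N+(m+1)).choose (m+1) : ℕ)) : ℝ[X]) := by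
      exact_mod_cast congrArg (Nat.cast : ℕ → ℝ[X]) h1
    simp only [C_mul, C_add, C_1, map_ofNat, map_natCast]
    push_cast
    linear_combination (X:ℝ[X])^(N+1) * (1-X)^m * hkeyP

private lemma aux_main (N k : ℕ) :
    derivative (∑ j ∈ range k, C (((k - j) * (N+j).choose j : ℕ) : ℝ) * (X^(N+2) * (1-X)^j))
      = C (((N+1+k : ℕ)) : ℝ) * ∑ j ∈ range k, C (((N+j).choose j : ℕ) : ℝ) * (X^(N+1) * (1-X)^j) := by
  induction k with
  | zero => simp
  | succ k ih =>
    have hsplit : ∀ j ∈ range (k+1),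
        C (((k + 1 - j) * (N+j).choose j : ℕ) : ℝ) * (X^(N+2) * (1-X)^j)
        = C (((k - j) * (N+j).choose j : ℕ) : ℝ) * (X^(N+2) * (1-X)^j)
          + C (((N+j).choose j : ℕ) : ℝ) * (X^(N+2) * (1-X)^j) := by
      intro j hj
      have hj' : j ≤ k := Nat.lt_succ_iff.mp (mem_range.mp hj)
      have : k + 1 - j = (k - j) + 1 := by omega
      rw [this]
      push_cast
      rw [add_mul, C_add, C_mul, C_mul, C_1]
      ring
    rw [Finset.sum_congr rfl hsplit, Finset.sum_add_distrib, derivative_add,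
      Finset.sum_range_succ _ k]
    simp only [Nat.sub_self, Nat.zero_mul, Nat.cast_zero, map_zero, zero_mul, add_zero]
    rw [ih, aux_star N k]
    rw [Finset.sum_range_succ _ k]
    simp only [Nat.cast_mul, Nat.cast_add, Nat.cast_one, C_add, C_mul, C_1, map_natCast]
    ring

private lemma aux_bnd (M k : ℕ) (u : ℝ) (h0 : 0 ≤ u) (h1 : u ≤ 1) :
    (1-u)^(M+1) * ∑ j ∈ range k, (((M+j).choose j : ℕ) : ℝ) * u^j ≤ 1 := by
  induction M with
  | zero =>
    simp only [Nat.zero_add, Nat.choose_self, Nat.cast_one, one_mul, zero_add, pow_one]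
    have h := geom_sum_mul u k
    have hu : (0:ℝ) ≤ u^k := pow_nonneg h0 k
    nlinarith [h]
  | succ M ih =>
    have hA : (1-u) * ∑ j ∈ range k, (((M+1+j).choose j : ℕ) : ℝ) * u^j
        ≤ ∑ j ∈ range k, (((M+j).choose j : ℕ) : ℝ) * u^j := by
      rcases Nat.eq_zero_or_pos k with hk | hk
      · simp [hk]
      obtain ⟨K, rfl⟩ := Nat.exists_eq_add_of_lt hk
      rw [zero_add]
      set A := ∑ j ∈ range (K+1), (((M+1+j).choose j : ℕ) : ℝ) * u^j with hAdef
      have key : A - ∑ j ∈ range (K+1), (((M+j).choose j : ℕ) : ℝ) * u^j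
          ≤ u * A := by
        rw [hAdef, ← Finset.sum_sub_distrib]
        have e1 : ∑ j ∈ range (K+1),
            ((((M+1+j).choose j : ℕ) : ℝ) * u^j - (((M+j).choose j : ℕ) : ℝ) * u^j)
            = ∑ j ∈ range K,
              ((((M+1+(j+1)).choose (j+1) : ℕ) : ℝ) - (((M+(j+1)).choose (j+1) : ℕ) : ℝ)) * u^(j+1)
              + ((((M+1).choose 0 : ℕ) : ℝ) - (((M+0).choose 0 : ℕ) : ℝ)) * u^0 := by
          rw [Finset.sum_range_succ' _ K]
          congr 1
          · apply Finset.sum_congr rfl; intro j _; ring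
          · ring
        rw [e1]
        simp only [Nat.choose_zero_right, Nat.cast_one, sub_self, zero_mul, add_zero]
        have e2 : ∀ j ∈ range K,
            ((((M+1+(j+1)).choose (j+1) : ℕ) : ℝ) - (((M+(j+1)).choose (j+1) : ℕ) : ℝ)) * u^(j+1)
            = (((M+1+j).choose j : ℕ) : ℝ) * u^(j+1) := by
          intro j _
          have hp : (M+1+(j+1)).choose (j+1) = (M+1+j).choose j + (M+(j+1)).choose (j+1) := by
            have h2 : M+(j+1) = M+1+j := by omega
            rw [h2]
            exact Nat.choose_succ_succ (M+1+j) j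
          rw [hp]
          push_cast
          ring
        rw [Finset.sum_congr rfl e2]
        calc ∑ j ∈ range K, (((M+1+j).choose j : ℕ) : ℝ) * u^(j+1)
            ≤ ∑ j ∈ range (K+1), (((M+1+j).choose j : ℕ) : ℝ) * u^(j+1) := by
              rw [Finset.sum_range_succ]
              have : (0:ℝ) ≤ (((M+1+K).choose K : ℕ) : ℝ) * u^(K+1) := by positivity
              linarith
          _ = u * A := by
              rw [hAdef, Finset.mul_sum]
              apply Finset.sum_congr rfl; intro j _; ring
      linarith
    calc (1-u)^(M+1+1) * ∑ j ∈ range k, (((M+1+j).choose j : ℕ) : ℝ) * u^j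
        = (1-u)^(M+1) * ((1-u) * ∑ j ∈ range k, (((M+1+j).choose j : ℕ) : ℝ) * u^j) := by
          ring
      _ ≤ (1-u)^(M+1) * ∑ j ∈ range k, (((M+j).choose j : ℕ) : ℝ) * u^j := by
          apply mul_le_mul_of_nonneg_left hA
          have : (0:ℝ) ≤ 1 - u := by linarith
          positivity
      _ ≤ 1 := ih

end Aux

/-- There is an absolute constant `c₂ > 0` such that for all `n, k ≥ 1` there exists
`P ∈ 𝒫_{n,k}` with `P(1) ≠ 0` and `‖P'‖_{[0,1]} ≤ c₂ (n/k + 1) |P(1)|`. -/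
theorem stmt_1 : ∃ c₂ : ℝ, 0 < c₂ ∧ ∀ n k : ℕ, 1 ≤ n → 1 ≤ k →
    ∃ P R : Polynomial ℝ, R.natDegree ≤ k - 1 ∧ P = X ^ (n + 1) * R ∧
      P.eval 1 ≠ 0 ∧
      (⨆ x : Set.Icc (0:ℝ) 1, |(Polynomial.derivative P).eval (x : ℝ)|) ≤
        c₂ * ((n : ℝ) / (k : ℝ) + 1) * |P.eval 1| := by
  refine ⟨1, one_pos, ?_⟩
  intro n k hn hk
  obtain ⟨N, rfl⟩ : ∃ N, n = N + 1 := ⟨n - 1, by omega⟩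
  set R : ℝ[X] := ∑ j ∈ Finset.range k, C (((k - j) * (N+j).choose j : ℕ) : ℝ) * (1-X)^j
    with hRdef
  set P : ℝ[X] := X ^ (N + 1 + 1) * R with hPdef
  have hkR : (0:ℝ) < (k:ℝ) := by exact_mod_cast hk
  -- eval of P at 1
  have hReval : R.eval 1 = (k : ℝ) := by
    rw [hRdef, eval_finset_sum]
    rw [Finset.sum_eq_single_of_mem 0 (Finset.mem_range.mpr hk)]
    · simp
    · intro b _ hb
      simp [zero_pow hb]
  have hPeval : P.eval 1 = (k : ℝ) := by
    rw [hPdef, eval_mul, eval_pow, eval_X, one_pow, one_mul, hReval]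
  -- derivative identity
  have hP2 : P = ∑ j ∈ Finset.range k,
      C (((k - j) * (N+j).choose j : ℕ) : ℝ) * (X^(N+2) * (1-X)^j) := by
    rw [hPdef, hRdef, Finset.mul_sum]
    apply Finset.sum_congr rfl
    intro j _
    ring
  have hD : derivative P = C (((N+1+k : ℕ)) : ℝ) *
      ∑ j ∈ Finset.range k, C (((N+j).choose j : ℕ) : ℝ) * (X^(N+1) * (1-X)^j) := by
    rw [hP2, aux_main]
  refine ⟨P, R, ?_, rfl, ?_, ?_⟩
  · -- degree bound
    rw [hRdef]
    apply Polynomial.natDegree_sum_le_of_forall_le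
    intro j hj
    have hj' : j < k := Finset.mem_range.mp hj
    calc (C (((k - j) * (N+j).choose j : ℕ) : ℝ) * (1-X)^j).natDegree
        ≤ (C (((k - j) * (N+j).choose j : ℕ) : ℝ)).natDegree + ((1-X : ℝ[X])^j).natDegree :=
          natDegree_mul_le
      _ ≤ 0 + j * (1-X : ℝ[X]).natDegree := by
          gcongr
          · exact le_of_eq (natDegree_C _)
          · exact natDegree_pow_le
      _ ≤ 0 + j * 1 := by
          gcongr
          simpa using natDegree_sub_le (1:ℝ[X]) X
      _ ≤ k - 1 := by omega
  · rw [hPeval]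
    positivity
  · -- sup bound
    have hub : ∀ x : Set.Icc (0:ℝ) 1,
        |(derivative P).eval (x:ℝ)| ≤ ((N+1+k : ℕ) : ℝ) := by
      rintro ⟨x, hx0, hx1⟩
      simp only [Set.Icc] at *
      rw [hD]
      have heval : (C (((N+1+k : ℕ)) : ℝ) *
          ∑ j ∈ Finset.range k, C (((N+j).choose j : ℕ) : ℝ) * (X^(N+1) * (1-X)^j)).eval x
          = ((N+1+k : ℕ) : ℝ) *
            ∑ j ∈ Finset.range k, (((N+j).choose j : ℕ) : ℝ) * (x^(N+1) * (1-x)^j) := by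
        simp [eval_finset_sum]
      rw [heval]
      have hterm : ∀ j ∈ Finset.range k,
          (0:ℝ) ≤ (((N+j).choose j : ℕ) : ℝ) * (x^(N+1) * (1-x)^j) := by
        intro j _
        have h1x : (0:ℝ) ≤ 1 - x := by linarith
        positivity
      have hsum0 : (0:ℝ) ≤ ∑ j ∈ Finset.range k, (((N+j).choose j : ℕ) : ℝ) * (x^(N+1) * (1-x)^j) :=
        Finset.sum_nonneg hterm
      have hsum1 : ∑ j ∈ Finset.range k, (((N+j).choose j : ℕ) : ℝ) * (x^(N+1) * (1-x)^j) ≤ 1 := by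
        have hb := aux_bnd N k (1-x) (by linarith) (by linarith)
        have hxx : (1 : ℝ) - (1 - x) = x := by ring
        rw [hxx] at hb
        calc ∑ j ∈ Finset.range k, (((N+j).choose j : ℕ) : ℝ) * (x^(N+1) * (1-x)^j)
            = x^(N+1) * ∑ j ∈ Finset.range k, (((N+j).choose j : ℕ) : ℝ) * (1-x)^j := by
              rw [Finset.mul_sum]
              apply Finset.sum_congr rfl
              intro j _
              ring
          _ ≤ 1 := hb
      rw [abs_of_nonneg (by positivity)]
      calc ((N+1+k : ℕ) : ℝ) * ∑ j ∈ Finset.range k, (((N+j).choose j : ℕ) : ℝ) * (x^(N+1) * (1-x)^j)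
          ≤ ((N+1+k : ℕ) : ℝ) * 1 := by
            apply mul_le_mul_of_nonneg_left hsum1 (by positivity)
        _ = ((N+1+k : ℕ) : ℝ) := mul_one _
    have hrhs : (1:ℝ) * (((N+1 : ℕ) : ℝ) / (k:ℝ) + 1) * |P.eval 1| = ((N+1+k : ℕ) : ℝ) := by
      rw [hPeval, abs_of_pos hkR]
      field_simp
      push_cast
      ring
    rw [hrhs]
    haveI : Nonempty (Set.Icc (0:ℝ) 1) := ⟨⟨0, by norm_num⟩⟩
    exact ciSup_le hub
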